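/- For fixed β > 0 and δ > 0, there exists a constant C > 0 such that for all L ≥ 1: |∫_δ^∞ (e^{−4L²βu}/u)(1 − θ²(0, i/(πu))) du| ≤ (C/L²) e^{−4L²βδ}, where θ(0, i/(πu)) = Σ_{n∈ℤ} e^{−n²/u}. -/

import Mathlib

open Real Set MeasureTheory

/-- Bound on the Jacobi theta function. -/
lemma theta_upper {δ u : ℝ} (hδ : 0 < δ) (hu : δ ≤ u) :
    (∑' n : ℤ, Real.exp (-((n:ℝ)^2 / u))) ≤ 2 * Real.exp (1/δ) * u := by
  have hu0 : 0 < u := lt_of_lt_of_le hδ hu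
  set f : ℤ → ℝ := fun n => Real.exp (-((n:ℝ)^2 / u)) with hf
  set r : ℝ := Real.exp (-(1/u)) with hrdef
  have hr0 : 0 ≤ r := (Real.exp_pos _).le
  have hr1 : r < 1 := by
    apply Real.exp_lt_one_iff.mpr
    simp [hu0]
  have hgeo : Summable (fun k : ℕ => r ^ k) := summable_geometric_of_lt_one hr0 hr1
  have hkey : ∀ k : ℕ, Real.exp (-((k:ℝ)^2 / u)) ≤ r ^ k := by
    intro k
    have h1 : r ^ k = Real.exp ((k:ℝ) * (-(1/u))) := by
      rw [Real.exp_nat_mul]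
    rw [h1]
    apply Real.exp_le_exp.mpr
    have hk2 : (k:ℝ) ≤ (k:ℝ)^2 := by
      rcases Nat.eq_zero_or_pos k with h | h
      · simp [h]
      · have : (1:ℝ) ≤ (k:ℝ) := by exact_mod_cast h
        nlinarith
    have h3 : (k:ℝ)/u ≤ (k:ℝ)^2/u := by gcongr
    have h2 : (k:ℝ) * -(1/u) = -((k:ℝ)/u) := by ring
    rw [h2]
    linarith
  have hcast1 : ∀ k : ℕ, f (k:ℤ) = Real.exp (-((k:ℝ)^2 / u)) := by
    intro k; simp [hf]
  have hcast2 : ∀ k : ℕ, f (-((k:ℤ)+1)) = Real.exp (-(((k:ℝ)+1)^2 / u)) := by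
    intro k
    have h1 : ((-((k:ℤ)+1) : ℤ) : ℝ)^2 = ((k:ℝ)+1)^2 := by push_cast; ring
    simp only [hf, h1]
  have hkey2 : ∀ k : ℕ, Real.exp (-(((k:ℝ)+1)^2 / u)) ≤ r ^ k := by
    intro k
    have h1 := hkey (k+1)
    have h2 : (((k+1:ℕ)):ℝ) = (k:ℝ)+1 := by push_cast; ring
    rw [h2] at h1
    exact le_trans h1 (pow_le_pow_of_le_one hr0 hr1.le (Nat.le_succ k))
  have hpos : Summable (fun k : ℕ => f (k:ℤ)) := by
    apply Summable.of_nonneg_of_le (fun k => by rw [hcast1]; positivity) _ hgeo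
    intro k; rw [hcast1 k]; exact hkey k
  have hneg : Summable (fun k : ℕ => f (-((k:ℤ)+1))) := by
    apply Summable.of_nonneg_of_le (fun k => by rw [hcast2]; positivity) _ hgeo
    intro k; rw [hcast2 k]; exact hkey2 k
  have hsum : ∑' n : ℤ, f n = (∑' k : ℕ, f (k:ℤ)) + ∑' k : ℕ, f (-((k:ℤ)+1)) :=
    tsum_of_nat_of_neg_add_one hpos hneg
  have hb1 : (∑' k : ℕ, f (k:ℤ)) ≤ (1 - r)⁻¹ := by
    rw [← tsum_geometric_of_lt_one hr0 hr1]
    exact Summable.tsum_le_tsum (fun k => by rw [hcast1 k]; exact hkey k) hpos hgeo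
  have hb2 : (∑' k : ℕ, f (-((k:ℤ)+1))) ≤ (1 - r)⁻¹ := by
    rw [← tsum_geometric_of_lt_one hr0 hr1]
    exact Summable.tsum_le_tsum (fun k => by rw [hcast2 k]; exact hkey2 k) hneg hgeo
  have hrδ : Real.exp (-(1/δ)) ≤ r := by
    apply Real.exp_le_exp.mpr
    have : 1/u ≤ 1/δ := one_div_le_one_div_of_le hδ hu
    linarith
  have h1r : (1/u) * Real.exp (-(1/δ)) ≤ 1 - r := by
    have h := Real.add_one_le_exp (1/u)
    have hmul : (1/u + 1) * r ≤ Real.exp (1/u) * r :=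
      mul_le_mul_of_nonneg_right h hr0
    have hid : Real.exp (1/u) * r = 1 := by
      rw [hrdef, ← Real.exp_add]; simp
    have hru : (1/u) * Real.exp (-(1/δ)) ≤ (1/u) * r :=
      mul_le_mul_of_nonneg_left hrδ (by positivity)
    nlinarith
  have hpos1r : 0 < (1/u) * Real.exp (-(1/δ)) := by positivity
  have hinv : (1 - r)⁻¹ ≤ u * Real.exp (1/δ) := by
    have h1 : (1 - r)⁻¹ ≤ ((1/u) * Real.exp (-(1/δ)))⁻¹ :=
      inv_anti₀ hpos1r h1r
    have h2 : ((1/u) * Real.exp (-(1/δ)))⁻¹ = u * Real.exp (1/δ) := by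
      rw [Real.exp_neg]
      field_simp
    linarith [h1, le_of_eq h2]
  calc ∑' n : ℤ, f n = (∑' k : ℕ, f (k:ℤ)) + ∑' k : ℕ, f (-((k:ℤ)+1)) := hsum
    _ ≤ (1-r)⁻¹ + (1-r)⁻¹ := add_le_add hb1 hb2
    _ = 2 * (1-r)⁻¹ := by ring
    _ ≤ 2 * (u * Real.exp (1/δ)) := by linarith
    _ = 2 * Real.exp (1/δ) * u := by ring


lemma integral_exp_neg_mul_Ioi'' {m : ℝ} (hm : 0 < m) (a : ℝ) :
    ∫ u in Ioi a, Real.exp (-(m*u)) = Real.exp (-(m*a)) / m := by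
  have hd : ∀ x ∈ Ici a, HasDerivAt (fun u => -(Real.exp (-(m*u)) / m))
      (Real.exp (-(m*x))) x := by
    intro x _
    have h1 : HasDerivAt (fun u : ℝ => -(m*u)) (-m) x := by
      simpa using (hasDerivAt_id x).const_mul (-m)
    have h2 := (Real.hasDerivAt_exp (-(m*x))).comp x h1
    have h3 := (h2.div_const m).neg
    convert h3 using 1
    · rfl
    · rfl
    · funext u; rfl
    · field_simp
  have hint : IntegrableOn (fun u => Real.exp (-(m*u))) (Ioi a) := by
    simpa [neg_mul] using exp_neg_integrableOn_Ioi a hm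
  have htop : Filter.Tendsto (fun u : ℝ => -(m*u)) Filter.atTop Filter.atBot := by
    have h := Filter.Tendsto.const_mul_atTop hm (Filter.tendsto_id (α := ℝ))
    exact Filter.tendsto_neg_atBot_iff.mpr h
  have htend : Filter.Tendsto (fun u => -(Real.exp (-(m*u)) / m))
      Filter.atTop (nhds 0) := by
    have h := ((Real.tendsto_exp_atBot.comp htop).div_const m).neg
    simpa using h
  have hres := MeasureTheory.integral_Ioi_of_hasDerivAt_of_tendsto'
    hd hint htend
  rw [hres]
  ring

set_option maxHeartbeats 800000 in
theorem tail_integral_bound (β δ : ℝ) (hβ : 0 < β) (hδ : 0 < δ) :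
    ∃ C : ℝ, 0 < C ∧ ∀ L : ℝ, 1 ≤ L →
      |∫ u in Ioi δ, (Real.exp (-(4*L^2*β*u)) / u)
          * (1 - (∑' n : ℤ, Real.exp (-((n:ℝ)^2 / u)))^2)|
        ≤ (C / L^2) * Real.exp (-(4*L^2*β*δ)) := by
  set K : ℝ := 1/δ + 2*Real.exp (2/δ)/β with hK
  have hK0 : 0 < K := by positivity
  refine ⟨K * Real.exp (2*β*δ) / (2*β), by positivity, ?_⟩
  intro L hL
  have hL0 : 0 < L := lt_of_lt_of_le one_pos hL
  have hL2 : 1 ≤ L^2 := by nlinarith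
  set s : ℝ := 4*L^2*β with hs
  have hs4 : 4*β ≤ s := by nlinarith
  set m : ℝ := s - 2*β with hm
  have hm0 : 0 < m := by
    rw [hm]; nlinarith
  have hm2 : 2*β*L^2 ≤ m := by
    rw [hm, hs]; nlinarith
  -- pointwise bound
  have hbound : ∀ u ∈ Ioi δ,
      ‖(Real.exp (-(s*u)) / u) * (1 - (∑' n : ℤ, Real.exp (-((n:ℝ)^2 / u)))^2)‖
        ≤ K * Real.exp (-(m*u)) := by
    intro u hu
    rw [mem_Ioi] at hu
    have hu0 : 0 < u := lt_trans hδ hu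
    set θ : ℝ := ∑' n : ℤ, Real.exp (-((n:ℝ)^2 / u)) with hθdef
    have hθ0 : 0 ≤ θ := tsum_nonneg fun n => (Real.exp_pos _).le
    have hθle : θ ≤ 2 * Real.exp (1/δ) * u := theta_upper hδ hu.le
    have he : 0 < Real.exp (-(s*u)) := Real.exp_pos _
    have habs : |1 - θ^2| ≤ 1 + θ^2 := by
      rw [abs_le]; constructor <;> nlinarith
    have hθ2 : θ^2 ≤ 4 * Real.exp (2/δ) * u^2 := by
      have h1 : Real.exp (1/δ) * Real.exp (1/δ) = Real.exp (2/δ) := by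
        rw [← Real.exp_add]; ring_nf
      nlinarith [Real.exp_pos (1/δ)]
    have hrecip : 1/u ≤ 1/δ := one_div_le_one_div_of_le hδ hu.le
    have hexp1 : (1:ℝ) ≤ Real.exp (2*β*u) := by
      rw [← Real.exp_zero]; apply Real.exp_le_exp.mpr; positivity
    have hexp2 : 2*β*u ≤ Real.exp (2*β*u) := by
      have := Real.add_one_le_exp (2*β*u); linarith
    have hdiv : (1 + θ^2) / u ≤ K * Real.exp (2*β*u) := by
      rw [div_le_iff₀ hu0]
      have hKpos : 0 < Real.exp (2/δ) := Real.exp_pos _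
      have h1 : 1 + θ^2 ≤ 1/δ * u + 4 * Real.exp (2/δ) * u^2 := by
        have : 1 ≤ 1/δ * u := by
          rw [div_mul_eq_mul_div, le_div_iff₀ hδ]; linarith
        nlinarith
      have h2 : 1/δ * u + 4 * Real.exp (2/δ) * u^2
          ≤ K * Real.exp (2*β*u) * u := by
        rw [hK]
        have hβ' : (0:ℝ) < β := hβ
        have e1 : 1/δ * u ≤ 1/δ * Real.exp (2*β*u) * u := by
          have : 0 ≤ 1/δ * u := by positivity
          nlinarith
        have e2 : 4 * Real.exp (2/δ) * u^2
            ≤ (2*Real.exp (2/δ)/β) * Real.exp (2*β*u) * u := by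
          have h3 : 4 * Real.exp (2/δ) * u^2
              = (2*Real.exp (2/δ)/β) * (2*β*u) * u := by field_simp; ring
          rw [h3]
          have h4 : 0 ≤ (2*Real.exp (2/δ)/β) * u := by positivity
          nlinarith
        nlinarith
      exact h1.trans h2
    have hmerge : Real.exp (-(s*u)) * Real.exp (2*β*u) = Real.exp (-(m*u)) := by
      rw [← Real.exp_add]; congr 1; rw [hm]; ring
    rw [Real.norm_eq_abs, abs_mul, abs_div, abs_of_pos he, abs_of_pos hu0]
    calc Real.exp (-(s*u)) / u * |1 - θ^2|
        ≤ Real.exp (-(s*u)) / u * (1 + θ^2) := by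
          apply mul_le_mul_of_nonneg_left habs; positivity
      _ = Real.exp (-(s*u)) * ((1 + θ^2) / u) := by ring
      _ ≤ Real.exp (-(s*u)) * (K * Real.exp (2*β*u)) := by
          apply mul_le_mul_of_nonneg_left hdiv he.le
      _ = K * (Real.exp (-(s*u)) * Real.exp (2*β*u)) := by ring
      _ = K * Real.exp (-(m*u)) := by rw [hmerge]
  have hIntg : IntegrableOn (fun u => K * Real.exp (-(m*u))) (Ioi δ) := by
    apply Integrable.const_mul
    simpa [neg_mul, IntegrableOn] using exp_neg_integrableOn_Ioi δ hm0
  have hae : ∀ᵐ u ∂(volume.restrict (Ioi δ)),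
      ‖(Real.exp (-(s*u)) / u) * (1 - (∑' n : ℤ, Real.exp (-((n:ℝ)^2 / u)))^2)‖
        ≤ K * Real.exp (-(m*u)) :=
    (ae_restrict_iff' measurableSet_Ioi).mpr (Filter.Eventually.of_forall hbound)
  have hmain := MeasureTheory.norm_integral_le_of_norm_le hIntg hae
  rw [Real.norm_eq_abs] at hmain
  have hval : ∫ u in Ioi δ, K * Real.exp (-(m*u))
      = K * (Real.exp (-(m*δ)) / m) := by
    rw [MeasureTheory.integral_const_mul, integral_exp_neg_mul_Ioi'' hm0]
  rw [hval] at hmain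
  refine le_trans hmain ?_
  have hexpδ : Real.exp (-(m*δ)) = Real.exp (-(s*δ)) * Real.exp (2*β*δ) := by
    rw [← Real.exp_add]; congr 1; rw [hm]; ring
  rw [hexpδ]
  have hL2' : 0 < L^2 := by positivity
  have h2βL : 0 < 2*β*L^2 := by positivity
  have hfrac : Real.exp (-(s*δ)) * Real.exp (2*β*δ) / m
      ≤ Real.exp (-(s*δ)) * Real.exp (2*β*δ) / (2*β*L^2) := by
    apply div_le_div_of_nonneg_left (by positivity) h2βL hm2
  calc K * (Real.exp (-(s*δ)) * Real.exp (2*β*δ) / m)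
      ≤ K * (Real.exp (-(s*δ)) * Real.exp (2*β*δ) / (2*β*L^2)) := by
        apply mul_le_mul_of_nonneg_left hfrac hK0.le
    _ = K * Real.exp (2*β*δ) / (2*β) / L^2 * Real.exp (-(s*δ)) := by
        field_simp
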